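/- Let φ : S → T be a decreasing map between ordered sets with S Noetherian and T well-founded. Then the image of φ is finite. -/

import Mathlib

/-- A decreasing map `φ : S → T` with `S` Noetherian and `T` well-founded has
finite image. -/
theorem stmt_11 {S T : Type*} [PartialOrder S] [PartialOrder T]
    (φ : S → T) (hφ : Antitone φ)
    (hS : ∀ f : ℕ → S, ∃ i j : ℕ, i < j ∧ f i ≤ f j)
    (hT : ¬∃ g : ℕ → T, ∀ n : ℕ, g (n + 1) < g n) :
    (Set.range φ).Finite := by
  have hpwo : (Set.range φ).PartiallyWellOrderedOn (fun a b : T => b ≤ a) := by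
    intro g
    have hg : ∀ n, ((g n : T)) ∈ Set.range φ := fun n => (g n).2
    choose x hx using hg
    obtain ⟨i, j, hij, hle⟩ := hS x
    exact ⟨i, j, hij, by show ((g j : T)) ≤ g i; rw [← hx i, ← hx j]; exact hφ hle⟩
  rw [← Set.not_infinite]
  intro hinf
  set e := hinf.natEmbedding _ with he
  obtain ⟨g, hg⟩ := hpwo.exists_monotone_subseq (f := fun n => (e n : T)) (fun n => (e n).2)
  apply hT
  refine ⟨fun n => (e (g n) : T), fun n => ?_⟩
  refine lt_of_le_of_ne (hg n (n+1) (Nat.le_succ n)) ?_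
  intro h
  exact absurd (Subtype.ext h) (by simp [e.injective.eq_iff, g.injective.eq_iff])
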